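/- Let A = (a_{i,j}) be an n × n lower triangular complex matrix that is recurrent as a linear operator on ℂ^n. Suppose 1 ≤ i_1 < i_2 < … < i_k ≤ n are indices, λ ∈ ℂ satisfies λ = a_{i_1,i_1} = … = a_{i_k,i_k}, and a_{j,j} ≠ λ whenever j ∉ {i_1, …, i_k}. Then for each p with 1 ≤ p ≤ k there exists an eigenvector v_{i_p} of A for the eigenvalue λ of the form v_{i_p} = e_{i_p} + Σ_{j=i_p+1}^n x_j(i_p) e_j, where moreover x_j(i_p) = 0 whenever j = i_s with p < s ≤ k. (Here e_1, …, e_n is the canonical basis of ℂ^n.) -/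

import Mathlib

open Filter Topology Matrix

private lemma tri_pow_aux {n : ℕ} (B : Matrix (Fin n) (Fin n) ℂ)
    (hB : ∀ i j : Fin n, i < j → B i j = 0) :
    ∀ m : ℕ, (∀ i j : Fin n, i < j → (B ^ m) i j = 0) ∧ (∀ j, (B ^ m) j j = B j j ^ m) := by
  intro m
  induction m with
  | zero =>
    refine ⟨fun i j hij => ?_, fun j => ?_⟩
    · simp [Matrix.one_apply, hij.ne]
    · simp
  | succ m ih =>
    refine ⟨fun i j hij => ?_, fun j => ?_⟩
    · rw [pow_succ, Matrix.mul_apply]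
      apply Finset.sum_eq_zero
      intro l _
      rcases lt_or_ge i l with h | h
      · rw [ih.1 i l h, zero_mul]
      · rw [hB l j (lt_of_le_of_lt h hij), mul_zero]
    · rw [pow_succ, Matrix.mul_apply, Finset.sum_eq_single j]
      · rw [ih.2 j, pow_succ]
      · intro l _ hl
        rcases lt_or_gt_of_ne hl with h | h
        · rw [hB l j h, mul_zero]
        · rw [ih.1 j l h, zero_mul]
      · intro h; exact absurd (Finset.mem_univ j) h

private lemma tri_ker {n : ℕ} (M : Matrix (Fin n) (Fin n) ℂ)
    (h : ∀ i j : Fin n, i < j → M i j = 0) (v : Fin n → ℂ)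
    (hv : M.mulVec v = 0) (hz : ∀ j, M j j = 0 → v j = 0) : v = 0 := by
  have key : ∀ N : ℕ, ∀ j : Fin n, (j : ℕ) < N → v j = 0 := by
    intro N
    induction N with
    | zero => intro j hj; omega
    | succ N ih =>
      intro j hj
      rcases Nat.lt_or_ge (j : ℕ) N with hlt | hge
      · exact ih j hlt
      · have hrow : M.mulVec v j = 0 := by rw [hv]; rfl
        rw [Matrix.mulVec, dotProduct, Finset.sum_eq_single j] at hrow
        · rcases eq_or_ne (M j j) 0 with h0 | h0
          · exact hz j h0
          · exact (mul_eq_zero.1 hrow).resolve_left h0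
        · intro l _ hl
          rcases lt_or_gt_of_ne hl with hlj | hlj
          · have hlv : (l : ℕ) < (j : ℕ) := hlj
            rw [ih l (by omega), mul_zero]
          · rw [h j l hlj, zero_mul]
        · intro hj'; exact absurd (Finset.mem_univ j) hj'
  funext j
  exact key ((j : ℕ) + 1) j (Nat.lt_succ_self _)

private lemma finrank_finset_sup_le {V : Type*} [AddCommGroup V] [Module ℂ V]
    [FiniteDimensional ℂ V] (s : Finset ℂ) (G : ℂ → Submodule ℂ V) :
    Module.finrank ℂ ↥(s.sup G) ≤ ∑ μ ∈ s, Module.finrank ℂ (G μ) := by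
  classical
  induction s using Finset.induction_on with
  | empty => simp
  | @insert a s ha ih =>
    rw [Finset.sup_insert, Finset.sum_insert ha]
    have h1 := Submodule.finrank_sup_add_finrank_inf_eq (G a) (s.sup G)
    omega

/-- Let `A` be an `n × n` lower triangular complex matrix which is
recurrent as an operator on `ℂⁿ`.  If `λ` occurs on the diagonal exactly at the positions
`i₁ < i₂ < ⋯ < i_k`, then for each `p` there is an eigenvector `v` of `A` for `λ` of the
form `v = e_{i_p} + Σ_{j > i_p} x_j e_j` with `x_{i_s} = 0` for `p < s ≤ k`. -/
theorem lower_triangular_recurrent_eigenvectors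
    (n : ℕ) (A : Matrix (Fin n) (Fin n) ℂ)
    (hlt : ∀ i j : Fin n, i < j → A i j = 0)
    (hrec : Dense {x : Fin n → ℂ | ∃ m : ℕ → ℕ, StrictMono m ∧ (∀ k, 0 < m k) ∧
      Tendsto (fun k => (A ^ m k).mulVec x) atTop (𝓝 x)})
    (k : ℕ) (idx : Fin k → Fin n) (hidx : StrictMono idx) (lam : ℂ)
    (hdiag : ∀ s : Fin k, A (idx s) (idx s) = lam)
    (hne : ∀ j : Fin n, j ∉ Set.range idx → A j j ≠ lam) :
    ∀ p : Fin k, ∃ v : Fin n → ℂ,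
      A.mulVec v = lam • v ∧
      v (idx p) = 1 ∧
      (∀ j : Fin n, j < idx p → v j = 0) ∧
      (∀ s : Fin k, p < s → v (idx s) = 0) := by
  classical
  intro p
  set N : Matrix (Fin n) (Fin n) ℂ := A - lam • 1 with hN
  -- triangularity of A - μ•1
  have htriN : ∀ μ : ℂ, ∀ i j : Fin n, i < j →
      (A - μ • (1 : Matrix (Fin n) (Fin n) ℂ)) i j = 0 := by
    intro μ i j hij
    simp [Matrix.sub_apply, Matrix.one_apply, hij.ne, hlt i j hij]
  -- vecMul by lam • 1
  have hsm1 : ∀ (μ : ℂ) (x : Fin n → ℂ),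
      x ᵥ* ((μ • 1 : Matrix (Fin n) (Fin n) ℂ)) = μ • x := by
    intro μ x
    funext j
    simp [Matrix.vecMul, dotProduct, Matrix.one_apply, mul_ite, mul_comm]
  -- Step B: transpose-side Jordan obstruction vanishes by recurrence
  have claimT : ∀ φ : Fin n → ℂ, (φ ᵥ* N) ᵥ* N = 0 → φ ᵥ* N = 0 := by
    intro φ hφ2
    set ψ := φ ᵥ* N with hψdef
    have hψeq : ψ = φ ᵥ* A - lam • φ := by
      rw [hψdef, hN, Matrix.vecMul_sub, hsm1]
    have hψA : ψ ᵥ* A = lam • ψ := by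
      have h0 : ψ ᵥ* N = 0 := hφ2
      rw [hN, Matrix.vecMul_sub, hsm1, sub_eq_zero] at h0
      exact h0
    have hφA : φ ᵥ* A = lam • φ + ψ := by
      rw [hψeq]; abel
    have hψpow : ∀ m : ℕ, ψ ᵥ* (A ^ m) = lam ^ m • ψ := by
      intro m
      induction m with
      | zero => simp [Matrix.vecMul_one]
      | succ m ih =>
        rw [pow_succ, ← Matrix.vecMul_vecMul, ih, Matrix.smul_vecMul, hψA,
          smul_smul, ← pow_succ]
    have hφpow : ∀ m : ℕ,
        φ ᵥ* (A ^ (m + 1)) = lam ^ (m + 1) • φ + (((m : ℂ) + 1) * lam ^ m) • ψ := by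
      intro m
      induction m with
      | zero => simp [pow_one, hφA]
      | succ m ih =>
        rw [pow_succ, ← Matrix.vecMul_vecMul, ih, Matrix.add_vecMul,
          Matrix.smul_vecMul, Matrix.smul_vecMul, hφA, hψA]
        rw [smul_add, smul_smul, smul_smul, add_assoc, ← add_smul]
        congr 1
        all_goals (congr 1; push_cast; ring)
    have hcont : ∀ w : Fin n → ℂ, Continuous fun y : Fin n → ℂ => w ⬝ᵥ y := by
      intro w
      exact continuous_finset_sum _ fun j _ => continuous_const.mul (continuous_apply j)
    have hzero : ∀ x ∈ {x : Fin n → ℂ | ∃ m : ℕ → ℕ, StrictMono m ∧ (∀ k, 0 < m k) ∧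
        Tendsto (fun k => (A ^ m k).mulVec x) atTop (𝓝 x)}, ψ ⬝ᵥ x = 0 := by
      rintro x ⟨m, hmono, hpos, hlim⟩
      have hmtop : Tendsto m atTop atTop := hmono.tendsto_atTop
      have hψlim : Tendsto (fun j => lam ^ (m j) * (ψ ⬝ᵥ x)) atTop (𝓝 (ψ ⬝ᵥ x)) := by
        have h1 := ((hcont ψ).tendsto x).comp hlim
        have h2 : ∀ j : ℕ, ψ ⬝ᵥ ((A ^ m j).mulVec x) = lam ^ (m j) * (ψ ⬝ᵥ x) := by
          intro j
          rw [Matrix.dotProduct_mulVec, hψpow (m j), smul_dotProduct, smul_eq_mul]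
        exact Filter.Tendsto.congr h2 h1
      rcases lt_trichotomy ‖lam‖ 1 with hl | hl | hl
      · have h0 : Tendsto (fun j => lam ^ (m j) * (ψ ⬝ᵥ x)) atTop (𝓝 (0 * (ψ ⬝ᵥ x))) := by
          exact ((tendsto_pow_atTop_nhds_zero_of_norm_lt_one hl).comp hmtop).mul_const _
        have := tendsto_nhds_unique hψlim h0
        rw [zero_mul] at this
        exact this
      · by_contra hc
        have hcpos : 0 < ‖ψ ⬝ᵥ x‖ := norm_pos_iff.2 hc
        have hφlim : Tendsto (fun j => φ ⬝ᵥ ((A ^ m j).mulVec x)) atTop (𝓝 (φ ⬝ᵥ x)) := by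
          exact ((hcont φ).tendsto x).comp hlim
        have hlower : ∀ j : ℕ, (m j : ℝ) * ‖ψ ⬝ᵥ x‖ - ‖φ ⬝ᵥ x‖
            ≤ ‖φ ⬝ᵥ ((A ^ m j).mulVec x)‖ := by
          intro j
          obtain ⟨t, ht⟩ := Nat.exists_eq_succ_of_ne_zero (hpos j).ne'
          have he : φ ⬝ᵥ ((A ^ m j).mulVec x)
              = lam ^ (t + 1) * (φ ⬝ᵥ x) + (((t : ℂ) + 1) * lam ^ t) * (ψ ⬝ᵥ x) := by
            rw [ht, Matrix.dotProduct_mulVec, hφpow t, add_dotProduct,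
              smul_dotProduct, smul_dotProduct, smul_eq_mul, smul_eq_mul]
          have h1 : ‖lam ^ (t + 1) * (φ ⬝ᵥ x)‖ = ‖φ ⬝ᵥ x‖ := by
            rw [norm_mul, norm_pow, hl, one_pow, one_mul]
          have h2 : ‖(((t : ℂ) + 1) * lam ^ t) * (ψ ⬝ᵥ x)‖ = (m j : ℝ) * ‖ψ ⬝ᵥ x‖ := by
            rw [norm_mul, norm_mul, norm_pow, hl, one_pow, mul_one, ht]
            congr 1
            have : ((t : ℂ) + 1) = ((t + 1 : ℕ) : ℂ) := by push_cast; ring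
            rw [this, Complex.norm_natCast]
          have h3 : ‖(((t : ℂ) + 1) * lam ^ t) * (ψ ⬝ᵥ x)‖
              ≤ ‖lam ^ (t + 1) * (φ ⬝ᵥ x) + (((t : ℂ) + 1) * lam ^ t) * (ψ ⬝ᵥ x)‖
                + ‖lam ^ (t + 1) * (φ ⬝ᵥ x)‖ := by
            have h4 := norm_sub_le
              (lam ^ (t + 1) * (φ ⬝ᵥ x) + (((t : ℂ) + 1) * lam ^ t) * (ψ ⬝ᵥ x))
              (lam ^ (t + 1) * (φ ⬝ᵥ x))
            simpa using h4
          rw [he]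
          rw [h1] at h3
          rw [h2] at h3
          linarith
        have hlowtop : Tendsto (fun j => (m j : ℝ) * ‖ψ ⬝ᵥ x‖ - ‖φ ⬝ᵥ x‖) atTop atTop := by
          simp only [sub_eq_add_neg]
          apply tendsto_atTop_add_const_right
          exact (tendsto_natCast_atTop_atTop.comp hmtop).atTop_mul_const hcpos
        have hnormtop : Tendsto (fun j => ‖φ ⬝ᵥ ((A ^ m j).mulVec x)‖) atTop atTop :=
          tendsto_atTop_mono hlower hlowtop
        exact not_tendsto_atTop_of_tendsto_nhds hφlim.norm hnormtop
      · by_contra hc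
        have hcpos : 0 < ‖ψ ⬝ᵥ x‖ := norm_pos_iff.2 hc
        have h2 : Tendsto (fun j => ‖lam ^ (m j) * (ψ ⬝ᵥ x)‖) atTop atTop := by
          simp only [norm_mul, norm_pow]
          exact ((tendsto_pow_atTop_atTop_of_one_lt hl).comp hmtop).atTop_mul_const hcpos
        exact not_tendsto_atTop_of_tendsto_nhds hψlim.norm h2
    have hψ0 : (fun x : Fin n → ℂ => ψ ⬝ᵥ x) = fun _ => 0 :=
      Continuous.ext_on hrec (hcont ψ) continuous_const hzero
    funext j
    have := congrFun hψ0 (Pi.single j 1)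
    simpa [dotProduct_single] using this
  -- transfer Jordan-obstruction to the mulVec side via rank
  have claimT' : ∀ w : Fin n → ℂ, Nᵀ *ᵥ (Nᵀ *ᵥ w) = 0 → Nᵀ *ᵥ w = 0 := by
    intro w hw
    rw [Matrix.mulVec_transpose]
    apply claimT
    rw [Matrix.mulVec_transpose, Matrix.mulVec_transpose] at hw
    exact hw
  have hkerT : LinearMap.ker (Matrix.mulVecLin (Nᵀ * Nᵀ)) = LinearMap.ker (Matrix.mulVecLin Nᵀ) := by
    ext w
    simp only [LinearMap.mem_ker, Matrix.mulVecLin_apply]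
    constructor
    · intro hw
      apply claimT'
      rw [Matrix.mulVec_mulVec]
      exact hw
    · intro hw
      rw [← Matrix.mulVec_mulVec, hw, Matrix.mulVec_zero]
  have hrank2 : (N * N).rank = N.rank := by
    have e1 : (N * N)ᵀ = Nᵀ * Nᵀ := by rw [Matrix.transpose_mul]
    have h1 : (Nᵀ * Nᵀ).rank = Nᵀ.rank := by
      have hk := congrArg (fun S : Submodule ℂ (Fin n → ℂ) => Module.finrank ℂ S) hkerT
      have r1 := LinearMap.finrank_range_add_finrank_ker (Matrix.mulVecLin (Nᵀ * Nᵀ))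
      have r2 := LinearMap.finrank_range_add_finrank_ker (Matrix.mulVecLin Nᵀ)
      unfold Matrix.rank
      omega
    calc (N * N).rank = (N * N)ᵀ.rank := (Matrix.rank_transpose _).symm
      _ = (Nᵀ * Nᵀ).rank := by rw [e1]
      _ = Nᵀ.rank := h1
      _ = N.rank := Matrix.rank_transpose _
  have hker2 : ∀ w : Fin n → ℂ, N *ᵥ (N *ᵥ w) = 0 → N *ᵥ w = 0 := by
    have hle : LinearMap.ker (Matrix.mulVecLin N) ≤ LinearMap.ker (Matrix.mulVecLin (N * N)) := by
      intro w hw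
      simp only [LinearMap.mem_ker, Matrix.mulVecLin_apply] at hw ⊢
      rw [← Matrix.mulVec_mulVec, hw, Matrix.mulVec_zero]
    have heq : LinearMap.ker (Matrix.mulVecLin N) = LinearMap.ker (Matrix.mulVecLin (N * N)) := by
      apply Submodule.eq_of_le_of_finrank_le hle
      have r1 := LinearMap.finrank_range_add_finrank_ker (Matrix.mulVecLin (N * N))
      have r2 := LinearMap.finrank_range_add_finrank_ker (Matrix.mulVecLin N)
      have h2 : (N * N).rank = N.rank := hrank2
      unfold Matrix.rank at h2
      omega
    intro w hw
    have hw' : w ∈ LinearMap.ker (Matrix.mulVecLin (N * N)) := by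
      simp only [LinearMap.mem_ker, Matrix.mulVecLin_apply, ← Matrix.mulVec_mulVec]
      exact hw
    rw [← heq] at hw'
    simpa only [LinearMap.mem_ker, Matrix.mulVecLin_apply] using hw'
  have hkerpow : ∀ (m : ℕ) (w : Fin n → ℂ), (N ^ (m + 1)) *ᵥ w = 0 → N *ᵥ w = 0 := by
    intro m
    induction m with
    | zero => intro w hw; rwa [pow_one] at hw
    | succ m ih =>
      intro w hw
      have h1 : (N ^ (m + 1)) *ᵥ (N *ᵥ w) = 0 := by
        rw [Matrix.mulVec_mulVec, ← pow_succ]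
        exact hw
      exact hker2 w (ih (N *ᵥ w) h1)
  -- the endomorphism
  set f : Module.End ℂ (Fin n → ℂ) := Matrix.toLinAlgEquiv' A with hf
  have hfpow : ∀ (μ : ℂ) (m : ℕ) (x : Fin n → ℂ),
      ((f - μ • 1) ^ m) x = ((A - μ • 1) ^ m) *ᵥ x := by
    intro μ m x
    have h1 : (f - μ • 1) ^ m = Matrix.toLinAlgEquiv' ((A - μ • 1) ^ m) := by
      rw [map_pow, map_sub, _root_.map_smul, _root_.map_one, hf]
    rw [h1, Matrix.toLinAlgEquiv'_apply]
  have hmem : ∀ (μ : ℂ) (x : Fin n → ℂ),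
      x ∈ Module.End.maxGenEigenspace f μ ↔ ∃ m : ℕ, ((A - μ • 1) ^ m) *ᵥ x = 0 := by
    intro μ x
    rw [Module.End.mem_maxGenEigenspace]
    exact exists_congr fun m => by rw [hfpow]
  -- vanishing of coordinates forces zero for generalized eigenvectors
  have hvanish : ∀ (μ : ℂ) (x : Fin n → ℂ), (∃ m : ℕ, ((A - μ • 1) ^ m) *ᵥ x = 0) →
      (∀ j : Fin n, A j j = μ → x j = 0) → x = 0 := by
    rintro μ x ⟨m, hm⟩ hx
    apply tri_ker ((A - μ • 1) ^ m) (tri_pow_aux _ (htriN μ) m).1 x hm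
    intro j hj
    rw [(tri_pow_aux _ (htriN μ) m).2 j] at hj
    rcases Nat.eq_zero_or_pos m with h0 | h0
    · rw [h0, pow_zero] at hj
      exact absurd hj one_ne_zero
    · have : (A - μ • 1) j j = 0 := by
        exact pow_eq_zero_iff h0.ne' |>.mp hj
      have hjj : A j j = μ := by
        have h2 : A j j - μ = 0 := by
          simpa [Matrix.sub_apply, Matrix.one_apply] using this
        linear_combination h2
      exact hx j hjj
  -- dimension bound
  have hdimle : ∀ μ : ℂ, Module.finrank ℂ ↥(Module.End.maxGenEigenspace f μ)
      ≤ (Finset.univ.filter fun j : Fin n => A j j = μ).card := by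
    intro μ
    let Φ : ↥(Module.End.maxGenEigenspace f μ) →ₗ[ℂ] ({j : Fin n // A j j = μ} → ℂ) :=
      { toFun := fun v j => v.1 j.1
        map_add' := fun a b => rfl
        map_smul' := fun c a => rfl }
    have hinj : Function.Injective Φ := by
      apply (injective_iff_map_eq_zero Φ).2
      intro v hv
      have h0 : v.1 = 0 := by
        apply hvanish μ v.1 ((hmem μ v.1).1 v.2)
        intro j hj
        exact congrFun hv ⟨j, hj⟩
      exact Subtype.ext h0
    calc Module.finrank ℂ ↥(Module.End.maxGenEigenspace f μ)
        ≤ Module.finrank ℂ ({j : Fin n // A j j = μ} → ℂ) :=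
          LinearMap.finrank_le_finrank_of_injective hinj
      _ = Fintype.card {j : Fin n // A j j = μ} := Module.finrank_pi ℂ
      _ = (Finset.univ.filter fun j : Fin n => A j j = μ).card := Fintype.card_subtype _
  set s : Finset ℂ := Finset.image (fun j : Fin n => A j j) Finset.univ with hs
  have hbot : ∀ μ : ℂ, μ ∉ s → Module.End.maxGenEigenspace f μ = ⊥ := by
    intro μ hμ
    rw [Submodule.eq_bot_iff]
    intro v hv
    apply hvanish μ v ((hmem μ v).1 hv)
    intro j hj
    exact absurd (show μ ∈ s from Finset.mem_image.2 ⟨j, Finset.mem_univ j, hj⟩) hμ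
  have hsuple : (⊤ : Submodule ℂ (Fin n → ℂ))
      ≤ s.sup (fun μ => Module.End.maxGenEigenspace f μ) := by
    rw [← Module.End.iSup_maxGenEigenspace_eq_top f]
    apply iSup_le
    intro μ
    by_cases hμ : μ ∈ s
    · exact Finset.le_sup hμ
    · rw [hbot μ hμ]; exact bot_le
  have hn_le : n ≤ ∑ μ ∈ s, Module.finrank ℂ ↥(Module.End.maxGenEigenspace f μ) := by
    have h1 : Module.finrank ℂ ↥(⊤ : Submodule ℂ (Fin n → ℂ)) = n := by
      rw [finrank_top, Module.finrank_pi, Fintype.card_fin]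
    calc n = Module.finrank ℂ ↥(⊤ : Submodule ℂ (Fin n → ℂ)) := h1.symm
      _ ≤ Module.finrank ℂ ↥(s.sup fun μ => Module.End.maxGenEigenspace f μ) :=
          Submodule.finrank_mono hsuple
      _ ≤ ∑ μ ∈ s, Module.finrank ℂ ↥(Module.End.maxGenEigenspace f μ) :=
          finrank_finset_sup_le s _
  have hsumcount : ∑ μ ∈ s, (Finset.univ.filter fun j : Fin n => A j j = μ).card = n := by
    rw [← Finset.card_eq_sum_card_fiberwise
      (fun j (_ : j ∈ Finset.univ) => Finset.mem_image_of_mem (fun j : Fin n => A j j)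
        (Finset.mem_univ j))]
    rw [Finset.card_univ, Fintype.card_fin]
  have hlam_s : lam ∈ s := by
    rw [hs]
    exact Finset.mem_image.2 ⟨idx p, Finset.mem_univ _, hdiag p⟩
  have hdim_eq : Module.finrank ℂ ↥(Module.End.maxGenEigenspace f lam)
      = (Finset.univ.filter fun j : Fin n => A j j = lam).card := by
    by_contra hne'
    have hlt' := lt_of_le_of_ne (hdimle lam) hne'
    have hsum := Finset.sum_lt_sum (fun μ (_ : μ ∈ s) => hdimle μ) ⟨lam, hlam_s, hlt'⟩
    omega
  have hcount_k : (Finset.univ.filter fun j : Fin n => A j j = lam).card = k := by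
    have himg : (Finset.univ.filter fun j : Fin n => A j j = lam)
        = Finset.image idx Finset.univ := by
      ext j
      simp only [Finset.mem_filter, Finset.mem_univ, true_and, Finset.mem_image]
      constructor
      · intro hj
        by_contra hj'
        push_neg at hj'
        refine hne j ?_ hj
        rintro ⟨t, rfl⟩
        exact hj' t rfl
      · rintro ⟨t, _, rfl⟩
        exact hdiag t
    rw [himg, Finset.card_image_of_injective _ hidx.injective, Finset.card_univ, Fintype.card_fin]
  -- eigenspace
  have hGE : Module.End.maxGenEigenspace f lam ≤ LinearMap.ker (Matrix.mulVecLin N) := by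
    intro v hv
    obtain ⟨m, hm⟩ := (hmem lam v).1 hv
    rw [← hN] at hm
    simp only [LinearMap.mem_ker, Matrix.mulVecLin_apply]
    rcases m with _ | m
    · rw [pow_zero, Matrix.one_mulVec] at hm
      rw [hm, Matrix.mulVec_zero]
    · exact hkerpow m v hm
  have hEdimge : k ≤ Module.finrank ℂ ↥(LinearMap.ker (Matrix.mulVecLin N)) := by
    calc k = (Finset.univ.filter fun j : Fin n => A j j = lam).card := hcount_k.symm
      _ = Module.finrank ℂ ↥(Module.End.maxGenEigenspace f lam) := hdim_eq.symm
      _ ≤ Module.finrank ℂ ↥(LinearMap.ker (Matrix.mulVecLin N)) := Submodule.finrank_mono hGE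
  -- coordinate map on the eigenspace
  let Φ : ↥(LinearMap.ker (Matrix.mulVecLin N)) →ₗ[ℂ] (Fin k → ℂ) :=
    { toFun := fun v t => v.1 (idx t)
      map_add' := fun a b => rfl
      map_smul' := fun c a => rfl }
  have hΦinj : Function.Injective Φ := by
    apply (injective_iff_map_eq_zero Φ).2
    intro v hv
    have hm : N *ᵥ v.1 = 0 := v.2
    have h0 : v.1 = 0 := by
      apply hvanish lam v.1 ⟨1, by rw [pow_one, ← hN]; exact hm⟩
      intro j hj
      have hjr : j ∈ Set.range idx := by
        by_contra hjr
        exact hne j hjr hj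
      obtain ⟨t, rfl⟩ := hjr
      exact congrFun hv t
    exact Subtype.ext h0
  have hEdimle : Module.finrank ℂ ↥(LinearMap.ker (Matrix.mulVecLin N)) ≤ k := by
    calc Module.finrank ℂ ↥(LinearMap.ker (Matrix.mulVecLin N))
        ≤ Module.finrank ℂ (Fin k → ℂ) := LinearMap.finrank_le_finrank_of_injective hΦinj
      _ = k := by rw [Module.finrank_pi, Fintype.card_fin]
  have hΦsurj : Function.Surjective Φ := by
    have hfr : Module.finrank ℂ ↥(LinearMap.ker (Matrix.mulVecLin N))
        = Module.finrank ℂ (Fin k → ℂ) := by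
      rw [Module.finrank_pi, Fintype.card_fin]
      omega
    exact (LinearMap.injective_iff_surjective_of_finrank_eq_finrank hfr).1 hΦinj
  obtain ⟨v, hv⟩ := hΦsurj (Pi.single p 1)
  have hvk : N *ᵥ v.1 = 0 := v.2
  have hidxcoord : ∀ t : Fin k, v.1 (idx t) = (Pi.single p 1 : Fin k → ℂ) t := fun t => by exact congrFun hv t
  refine ⟨v.1, ?_, ?_, ?_, ?_⟩
  · have h1 : (A - lam • 1) *ᵥ v.1 = 0 := by rw [← hN]; exact hvk
    rw [Matrix.sub_mulVec, Matrix.smul_mulVec, Matrix.one_mulVec, sub_eq_zero] at h1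
    exact h1
  · rw [hidxcoord p, Pi.single_eq_same]
  · have hzero_lt : ∀ M : ℕ, ∀ j : Fin n, (j : ℕ) < M → j < idx p → v.1 j = 0 := by
      intro M
      induction M with
      | zero => intro j hj; omega
      | succ M ih =>
        intro j hj hjp
        rcases Nat.lt_or_ge (j : ℕ) M with h | h
        · exact ih j h hjp
        · have hrow : (N *ᵥ v.1) j = 0 := by rw [hvk]; rfl
          rw [Matrix.mulVec, dotProduct, Finset.sum_eq_single j] at hrow
          · rcases eq_or_ne (N j j) 0 with h0 | h0
            · have hjlam : A j j = lam := by
                rw [hN] at h0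
                have h2 : A j j - lam = 0 := by
                  simpa [Matrix.sub_apply, Matrix.one_apply] using h0
                linear_combination h2
              have hjr : j ∈ Set.range idx := by
                by_contra hjr
                exact hne j hjr hjlam
              obtain ⟨t, ht⟩ := hjr
              have htp : t ≠ p := by
                intro hteq
                rw [hteq] at ht
                exact absurd (ht ▸ hjp) (lt_irrefl _)
              rw [← ht, hidxcoord t, Pi.single_eq_of_ne htp]
            · exact (mul_eq_zero.1 hrow).resolve_left h0
          · intro l _ hl
            rcases lt_or_gt_of_ne hl with hlj | hlj
            · have hlv : (l : ℕ) < (j : ℕ) := hlj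
              rw [ih l (by omega) (lt_trans hlj hjp), mul_zero]
            · have : N j l = 0 := by rw [hN]; exact htriN lam j l hlj
              rw [this, zero_mul]
          · intro hj'
            exact absurd (Finset.mem_univ j) hj'
    exact fun j hj => hzero_lt ((j : ℕ) + 1) j (Nat.lt_succ_self _) hj
  · intro t ht
    rw [hidxcoord t, Pi.single_eq_of_ne (ne_of_gt ht)]
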